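/- arXiv:1703.08797 — 2 statements merged into one kernel-verified Lean document; each statement's English description precedes it below -/
import Mathlib

section
/- Let b_l = −(1/√2) log( (k−l) l / (2β) ) for l = 1,…,k−1, and define constants γ_j by −γ_j = γ_{k−j+1} = (1/2) Σ_{i=j}^{k−j} b_i for j ≤ k/2. Then the functions ρ̃_j⁰(t) = (j − (k+1)/2) η(t) + γ_j, j = 1,…,k, solve the system ρ_j'(t) + ρ_j(t)/(2t) − β e^{−√2(ρ_{j+1}(t) − ρ_j(t))} + β e^{−√2(ρ_j(t) − ρ_{j−1}(t))} = γ_j/(2t) on (−∞,−1], with the conventions ρ_{k+1} = +∞ and ρ₀ = −∞ (so the corresponding exponential terms vanish for j = k and j = 1). -/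
open MeasureTheory Real Filter Set Topology

noncomputable section

/-- The heteroclinic profile `w(s) = tanh(s/√2)`. -/
def w (s : ℝ) : ℝ := Real.tanh (s / Real.sqrt 2)

/-- The Allen-Cahn nonlinearity `f(u) = (1-u²)u`. -/
def f (u : ℝ) : ℝ := (1 - u ^ 2) * u

/-- `f'(u) = 1 - 3u²`. -/
def fp (u : ℝ) : ℝ := 1 - 3 * u ^ 2

/-- The interaction constant β. -/
def β : ℝ :=
  6 * (∫ x : ℝ, Real.exp (Real.sqrt 2 * x) * (1 - w x ^ 2) * deriv w x) /
    ∫ x : ℝ, deriv w x ^ 2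

/-- The constants `b_l`. -/
def bcoef (k l : ℕ) : ℝ :=
  -(1 / Real.sqrt 2) * Real.log (((k : ℝ) - (l : ℝ)) * (l : ℝ) / (2 * β))

/-- The constants `γ_j`, determined by `γ_{k-j+1} = -γ_j = (1/2)∑_{i=j}^{k-j} b_i` for `j ≤ k/2`. -/
def γcoef (k j : ℕ) : ℝ :=
  if j ≤ k / 2 then -(1 / 2) * ∑ i ∈ Finset.Icc j (k - j), bcoef k i
  else (1 / 2) * ∑ i ∈ Finset.Icc (k - j + 1) (j - 1), bcoef k i

/-- `ρ_j⁰(t) = √(-2(n-1)t) + (j-(k+1)/2) η(t) + γ_j`. -/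
def ρ0 (n k : ℕ) (η : ℝ → ℝ) (j : ℕ) (t : ℝ) : ℝ :=
  Real.sqrt (-2 * ((n : ℝ) - 1) * t) + ((j : ℝ) - ((k : ℝ) + 1) / 2) * η t + γcoef k j

/-- `ρ_j⁰` extended by the convention `ρ₀⁰ = ρ₁⁰ - η`. -/
def ρ0e (n k : ℕ) (η : ℝ → ℝ) (j : ℕ) (t : ℝ) : ℝ :=
  if j = 0 then ρ0 n k η 1 t - η t else ρ0 n k η j t

/-- `ρ_j = ρ_j⁰ + h_j`. -/
def ρf (n k : ℕ) (η : ℝ → ℝ) (h : ℕ → ℝ → ℝ) (j : ℕ) (t : ℝ) : ℝ :=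
  ρ0 n k η j t + h j t

/-- `z(t,r) = ∑_{j=1}^k (-1)^{j+1} w(r - ρ_j(t)) - 1`. -/
def zf (n k : ℕ) (η : ℝ → ℝ) (h : ℕ → ℝ → ℝ) (t r : ℝ) : ℝ :=
  (∑ j ∈ Finset.Icc 1 k, (-1 : ℝ) ^ (j + 1) * w (r - ρf n k η h j t)) - 1

/-- The error term `E`. -/
def Ef (n k : ℕ) (η : ℝ → ℝ) (h : ℕ → ℝ → ℝ) (t r : ℝ) : ℝ :=
  (∑ j ∈ Finset.Icc 1 k, (-1 : ℝ) ^ (j + 1) *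
      (deriv w (r - ρf n k η h j t) * deriv (ρf n k η h j) t +
        ((n : ℝ) - 1) / r * deriv w (r - ρf n k η h j t))) +
    f (zf n k η h t r) -
    ∑ j ∈ Finset.Icc 1 k, (-1 : ℝ) ^ (j + 1) * f (w (r - ρf n k η h j t))

/-- The nonlinear term `N(ψ) = f(z+ψ) - f(z) - f'(z)ψ`. -/
def Nf (n k : ℕ) (η : ℝ → ℝ) (h : ℕ → ℝ → ℝ) (ψ : ℝ → ℝ → ℝ) (t r : ℝ) : ℝ :=
  f (zf n k η h t r + ψ t r) - f (zf n k η h t r) - fp (zf n k η h t r) * ψ t r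

/-- The piecewise description of the weight `Φ`. -/
def PhiSpec (n k : ℕ) (σ : ℝ) (η : ℝ → ℝ) (Φ : ℝ → ℝ → ℝ) : Prop :=
  (∀ t r : ℝ, r ≤ (ρ0e n k η 0 t + ρ0e n k η 1 t) / 2 →
      Φ t r = Real.exp (σ * (r - ρ0 n k η 1 t))) ∧
    (∀ t r : ℝ, (ρ0e n k η 0 t + ρ0e n k η 1 t) / 2 ≤ r →
      r ≤ (ρ0 n k η 1 t + ρ0 n k η 2 t) / 2 →
      Φ t r = Real.exp (σ * (r - ρ0 n k η 2 t))) ∧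
    (∀ j : ℕ, 2 ≤ j → j < k → ∀ t r : ℝ,
      (ρ0 n k η j t + ρ0 n k η (j - 1) t) / 2 ≤ r →
      r ≤ (ρ0 n k η j t + ρ0 n k η (j + 1) t) / 2 →
      Φ t r =
        Real.exp (σ * (ρ0 n k η (j - 1) t - r)) + Real.exp (σ * (r - ρ0 n k η (j + 1) t))) ∧
    ∀ t r : ℝ, (ρ0 n k η k t + ρ0 n k η (k - 1) t) / 2 ≤ r →
      Φ t r = Real.exp (σ * (ρ0 n k η (k - 1) t - r))

/-- The class of admissible perturbations `h` on `(-∞, τ]`: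
`h ∈ C¹` and `sup |h| + sup (|t|/log|t|)|h'| < 1`. -/
def hSpec (k : ℕ) (τ : ℝ) (h h' : ℕ → ℝ → ℝ) : Prop :=
  (∀ j ∈ Finset.Icc 1 k, ∀ t ≤ τ, HasDerivAt (h j) (h' j t) t) ∧
    (∀ j ∈ Finset.Icc 1 k, ContinuousOn (h' j) (Set.Iic τ)) ∧
    ∃ a b : ℝ, a + b < 1 ∧
      (∀ t ≤ τ, Real.sqrt (∑ j ∈ Finset.Icc 1 k, h j t ^ 2) ≤ a) ∧
      ∀ t ≤ τ, |t| / Real.log |t| * Real.sqrt (∑ j ∈ Finset.Icc 1 k, h' j t ^ 2) ≤ b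

/-- The weighted sup norm `‖u‖_{C_Φ(S)} = ‖u/Φ‖_{L^∞(S)}`. -/
def cnorm (Φ u : ℝ → ℝ → ℝ) (S : Set (ℝ × ℝ)) : ℝ :=
  sSup ((fun p : ℝ × ℝ => |u p.1 p.2| / Φ p.1 p.2) '' S)

/-- Membership in the space `C_Φ(S)`: continuity and finiteness of the norm. -/
def memC (Φ u : ℝ → ℝ → ℝ) (S : Set (ℝ × ℝ)) : Prop :=
  ContinuousOn (fun p : ℝ × ℝ => u p.1 p.2) S ∧
    BddAbove ((fun p : ℝ × ℝ => |u p.1 p.2| / Φ p.1 p.2) '' S)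

/-- The parabolic region `(s,t) × (0,∞)`. -/
def QS (s t : ℝ) : Set (ℝ × ℝ) := Set.Ioo s t ×ˢ Set.Ioi 0

/-- The parabolic region `(-∞,t) × (0,∞)`. -/
def QI (t : ℝ) : Set (ℝ × ℝ) := Set.Iio t ×ˢ Set.Ioi 0

/-- The norm of the space Λ. -/
def lamNorm (k : ℕ) (T₀ : ℝ) (h h' : ℕ → ℝ → ℝ) : ℝ :=
  sSup ((fun t => Real.sqrt (∑ j ∈ Finset.Icc 1 k, h j t ^ 2)) '' Set.Iic (-T₀)) +
    sSup ((fun t => |t| / Real.log |t| * Real.sqrt (∑ j ∈ Finset.Icc 1 k, h' j t ^ 2)) ''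
      Set.Iic (-T₀))

/-- Membership in the set Λ. -/
def lamMem (k : ℕ) (T₀ : ℝ) (h h' : ℕ → ℝ → ℝ) : Prop :=
  (∀ j ∈ Finset.Icc 1 k, ∀ t ≤ -T₀, HasDerivAt (h j) (h' j t) t) ∧
    (∀ j ∈ Finset.Icc 1 k, ContinuousOn (h' j) (Set.Iic (-T₀))) ∧
    BddAbove ((fun t => Real.sqrt (∑ j ∈ Finset.Icc 1 k, h j t ^ 2)) '' Set.Iic (-T₀)) ∧
    BddAbove ((fun t => |t| / Real.log |t| * Real.sqrt (∑ j ∈ Finset.Icc 1 k, h' j t ^ 2)) ''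
      Set.Iic (-T₀)) ∧
    lamNorm k T₀ h h' < 1

/-- The ODE `η' + η/(2t) + e^{-√2 η} = 0` on `(-∞,-1]`, `η(-1) = 0`. -/
def etaODE (η : ℝ → ℝ) : Prop :=
  η (-1) = 0 ∧
    ∀ t ≤ (-1 : ℝ), HasDerivAt η (-(η t / (2 * t)) - Real.exp (-(Real.sqrt 2) * η t)) t

/-- Partial derivative in time. -/
def dT (ψ : ℝ → ℝ → ℝ) (t r : ℝ) : ℝ := deriv (fun τ => ψ τ r) t

/-- Partial derivative in the radial variable. -/
def dR (ψ : ℝ → ℝ → ℝ) (t r : ℝ) : ℝ := deriv (ψ t) r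

/-- Second partial derivative in the radial variable. -/
def dRR (ψ : ℝ → ℝ → ℝ) (t r : ℝ) : ℝ := deriv (deriv (ψ t)) r

/-- `ρ̃_j⁰(t) = (j - (k+1)/2) η(t) + γ_j`. -/
def ρt13 (k : ℕ) (η : ℝ → ℝ) (j : ℕ) (t : ℝ) : ℝ :=
  ((j : ℝ) - ((k : ℝ) + 1) / 2) * η t + γcoef k j

lemma hasDerivAt_tanh' (u : ℝ) : HasDerivAt Real.tanh (1 - Real.tanh u ^ 2) u := by
  have h := (Real.hasDerivAt_sinh u).div (Real.hasDerivAt_cosh u) (Real.cosh_pos u).ne'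
  have he : (fun x => Real.sinh x / Real.cosh x) = Real.tanh := by
    funext x; rw [Real.tanh_eq_sinh_div_cosh]
  rw [show Real.sinh / Real.cosh = Real.tanh from he] at h
  refine h.congr_deriv ?_
  have hc := (Real.cosh_pos u).ne'
  rw [Real.tanh_eq_sinh_div_cosh]
  field_simp

lemma w_hasDerivAt (s : ℝ) : HasDerivAt w ((1 - w s ^ 2) / Real.sqrt 2) s := by
  have h1 : HasDerivAt (fun x : ℝ => x / Real.sqrt 2) (1 / Real.sqrt 2) s := by
    simpa using (hasDerivAt_id s).div_const (Real.sqrt 2)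
  have h2 := (hasDerivAt_tanh' (s / Real.sqrt 2)).comp s h1
  have hw : w = fun s => Real.tanh (s / Real.sqrt 2) := rfl
  rw [hw]
  simpa [Function.comp_def, div_eq_mul_inv, one_div, mul_comm] using h2

lemma deriv_w (s : ℝ) : deriv w s = (1 - w s ^ 2) / Real.sqrt 2 := (w_hasDerivAt s).deriv

lemma one_sub_w_sq_pos (s : ℝ) : 0 < 1 - w s ^ 2 := by
  have := Real.cosh_pos (s / Real.sqrt 2)
  have h : 1 - w s ^ 2 = (Real.cosh (s / Real.sqrt 2) ^ 2)⁻¹ := by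
    rw [w, Real.tanh_eq_sinh_div_cosh, div_pow]
    field_simp
    exact Real.cosh_sq_sub_sinh_sq _
  rw [h]; positivity

lemma one_sub_w_sq_le (s : ℝ) : 1 - w s ^ 2 ≤ 4 * Real.exp (-(Real.sqrt 2) * |s|) := by
  have h : 1 - w s ^ 2 = (Real.cosh (s / Real.sqrt 2) ^ 2)⁻¹ := by
    rw [w, Real.tanh_eq_sinh_div_cosh, div_pow]
    field_simp
    exact Real.cosh_sq_sub_sinh_sq _
  rw [h]
  have hs2 : (0:ℝ) < Real.sqrt 2 := by positivity
  have hch : Real.exp (|s| / Real.sqrt 2) / 2 ≤ Real.cosh (s / Real.sqrt 2) := by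
    rw [← Real.cosh_abs, abs_div, abs_of_pos hs2, Real.cosh_eq]
    have := Real.exp_pos (-(|s| / Real.sqrt 2))
    linarith
  have hpos : (0:ℝ) < Real.exp (|s| / Real.sqrt 2) / 2 := by positivity
  have h2 : (Real.exp (|s| / Real.sqrt 2) / 2) ^ 2 ≤ Real.cosh (s / Real.sqrt 2) ^ 2 := by
    nlinarith
  have h3 : (Real.cosh (s / Real.sqrt 2) ^ 2)⁻¹ ≤ ((Real.exp (|s| / Real.sqrt 2) / 2) ^ 2)⁻¹ := by
    exact inv_anti₀ (by positivity) h2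
  refine h3.trans (le_of_eq ?_)
  have hss : Real.sqrt 2 * Real.sqrt 2 = 2 := Real.mul_self_sqrt (by norm_num)
  rw [div_pow, sq, ← Real.exp_add]
  have h4 : |s| / Real.sqrt 2 + |s| / Real.sqrt 2 = Real.sqrt 2 * |s| := by
    field_simp
    nlinarith [hss, abs_nonneg s]
  rw [h4, inv_div]
  rw [show -√2 * |s| = -(√2 * |s|) by ring, Real.exp_neg, div_eq_mul_inv]
  norm_num

lemma integrable_exp_neg_abs' {a : ℝ} (ha : 0 < a) :
    Integrable (fun s : ℝ => Real.exp (-a * |s|)) := by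
  have hIoi : IntegrableOn (fun s : ℝ => Real.exp (-a * |s|)) (Ioi 0) := by
    refine (exp_neg_integrableOn_Ioi 0 ha).congr_fun ?_ measurableSet_Ioi
    intro x hx
    show Real.exp (-a * x) = Real.exp (-a * |x|)
    rw [abs_of_pos hx]
  have hIic : IntegrableOn (fun s : ℝ => Real.exp (-a * |s|)) (Iic 0) := by
    rw [← Measure.map_neg_eq_self (volume : Measure ℝ)]
    have m : MeasurableEmbedding fun x : ℝ => -x :=
      (Homeomorph.neg ℝ).measurableEmbedding
    rw [m.integrableOn_map_iff]
    simp_rw [Function.comp_def, abs_neg, neg_preimage, neg_Iic, neg_zero]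
    exact (integrableOn_Ici_iff_integrableOn_Ioi).mpr hIoi
  rw [← integrableOn_univ, ← Iic_union_Ioi (a := (0:ℝ))]
  exact hIic.union hIoi

lemma continuous_tanh' : Continuous Real.tanh := by
  have h : Real.tanh = fun x => Real.sinh x / Real.cosh x :=
    funext fun x => Real.tanh_eq_sinh_div_cosh x
  rw [h]
  exact Real.continuous_sinh.div Real.continuous_cosh fun x => (Real.cosh_pos x).ne'

lemma continuous_w : Continuous w :=
  continuous_tanh'.comp (continuous_id.div_const _)

lemma sqrt2_ge_one : (1:ℝ) ≤ Real.sqrt 2 := by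
  nlinarith [Real.sq_sqrt (by norm_num : (0:ℝ) ≤ 2), Real.sqrt_nonneg 2]

lemma exp_prod_one (u : ℝ) : Real.exp u * Real.exp (-u) = 1 := by
  rw [← Real.exp_add, add_neg_cancel, Real.exp_zero]

lemma num_integrand_bound (x : ℝ) :
    Real.exp (Real.sqrt 2 * x) * (1 - w x ^ 2) ^ 2 / Real.sqrt 2
      ≤ 16 * Real.exp (-(Real.sqrt 2) * |x|) := by
  have h1 : 0 < 1 - w x ^ 2 := one_sub_w_sq_pos x
  have h2 := one_sub_w_sq_le x
  have he1 : Real.exp (Real.sqrt 2 * x) ≤ Real.exp (Real.sqrt 2 * |x|) :=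
    Real.exp_le_exp.2 (by nlinarith [le_abs_self x, Real.sqrt_nonneg 2])
  have hE := Real.exp_pos (-(Real.sqrt 2) * |x|)
  have hP := Real.exp_pos (Real.sqrt 2 * |x|)
  have hprod : Real.exp (Real.sqrt 2 * |x|) * Real.exp (-(Real.sqrt 2) * |x|) = 1 := by
    rw [show -(Real.sqrt 2) * |x| = -(Real.sqrt 2 * |x|) by ring]
    exact exp_prod_one _
  calc Real.exp (Real.sqrt 2 * x) * (1 - w x ^ 2) ^ 2 / Real.sqrt 2
      ≤ Real.exp (Real.sqrt 2 * x) * (1 - w x ^ 2) ^ 2 / 1 := by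
        apply div_le_div_of_nonneg_left (by positivity) (by norm_num) sqrt2_ge_one
    _ = Real.exp (Real.sqrt 2 * x) * (1 - w x ^ 2) ^ 2 := by ring
    _ ≤ Real.exp (Real.sqrt 2 * |x|) * (4 * Real.exp (-(Real.sqrt 2) * |x|)) ^ 2 := by
        apply mul_le_mul he1 (pow_le_pow_left₀ h1.le h2 2) (by positivity) hP.le
    _ = 16 * Real.exp (-(Real.sqrt 2) * |x|) := by nlinarith [hprod]

lemma den_integrand_bound (x : ℝ) :
    (1 - w x ^ 2) ^ 2 / 2 ≤ 16 * Real.exp (-(Real.sqrt 2) * |x|) := by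
  have h1 : 0 < 1 - w x ^ 2 := one_sub_w_sq_pos x
  have h2 := one_sub_w_sq_le x
  have hE := Real.exp_pos (-(Real.sqrt 2) * |x|)
  have hle1 : Real.exp (-(Real.sqrt 2) * |x|) ≤ 1 := by
    rw [Real.exp_le_one_iff]
    have := abs_nonneg x
    nlinarith [Real.sqrt_nonneg 2]
  nlinarith [sq_nonneg (Real.exp (-(Real.sqrt 2) * |x|))]

lemma integrable_num : Integrable
    (fun x => Real.exp (Real.sqrt 2 * x) * (1 - w x ^ 2) ^ 2 / Real.sqrt 2) := by
  have hg : Integrable (fun x : ℝ => 16 * Real.exp (-(Real.sqrt 2) * |x|)) :=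
    (integrable_exp_neg_abs' (by positivity : (0:ℝ) < Real.sqrt 2)).const_mul 16
  refine hg.mono ?_ ?_
  · apply Continuous.aestronglyMeasurable
    exact ((Real.continuous_exp.comp (continuous_const.mul continuous_id)).mul
      ((continuous_const.sub (continuous_w.pow 2)).pow 2)).div_const _
  · filter_upwards with x
    have h1 := one_sub_w_sq_pos x
    have hb := num_integrand_bound x
    have hE := Real.exp_pos (-(Real.sqrt 2) * |x|)
    rw [Real.norm_eq_abs, Real.norm_eq_abs, abs_of_pos (by positivity), abs_of_pos (by positivity)]
    exact hb

lemma integrable_den : Integrable (fun x => (1 - w x ^ 2) ^ 2 / 2) := by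
  have hg : Integrable (fun x : ℝ => 16 * Real.exp (-(Real.sqrt 2) * |x|)) :=
    (integrable_exp_neg_abs' (by positivity : (0:ℝ) < Real.sqrt 2)).const_mul 16
  refine hg.mono ?_ ?_
  · apply Continuous.aestronglyMeasurable
    exact ((continuous_const.sub (continuous_w.pow 2)).pow 2).div_const _
  · filter_upwards with x
    have h1 := one_sub_w_sq_pos x
    have hb := den_integrand_bound x
    have hE := Real.exp_pos (-(Real.sqrt 2) * |x|)
    rw [Real.norm_eq_abs, Real.norm_eq_abs, abs_of_pos (by positivity), abs_of_pos (by positivity)]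
    exact hb

lemma integral_pos_of_pos {f : ℝ → ℝ} (hf : ∀ x, 0 < f x) (hi : Integrable f) :
    0 < ∫ x, f x := by
  rw [integral_pos_iff_support_of_nonneg (fun x => (hf x).le) hi]
  have h : Function.support f = Set.univ := by
    ext x; simp [Function.mem_support, (hf x).ne']
  rw [h]
  simp

lemma beta_pos : 0 < β := by
  have hN : (∫ x : ℝ, Real.exp (Real.sqrt 2 * x) * (1 - w x ^ 2) * deriv w x)
      = ∫ x : ℝ, Real.exp (Real.sqrt 2 * x) * (1 - w x ^ 2) ^ 2 / Real.sqrt 2 := by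
    congr 1; funext x; rw [deriv_w]; ring
  have hD : (∫ x : ℝ, deriv w x ^ 2) = ∫ x : ℝ, (1 - w x ^ 2) ^ 2 / 2 := by
    congr 1; funext x; rw [deriv_w, div_pow, Real.sq_sqrt (by norm_num : (0:ℝ) ≤ 2)]
  have hNpos : 0 < ∫ x : ℝ, Real.exp (Real.sqrt 2 * x) * (1 - w x ^ 2) ^ 2 / Real.sqrt 2 :=
    integral_pos_of_pos (fun x => by 
      have := one_sub_w_sq_pos x
      positivity) integrable_num
  have hDpos : 0 < ∫ x : ℝ, (1 - w x ^ 2) ^ 2 / 2 :=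
    integral_pos_of_pos (fun x => by 
      have := one_sub_w_sq_pos x
      positivity) integrable_den
  rw [β, hN, hD]
  positivity

lemma sum_split (f : ℕ → ℝ) {a b : ℕ} (h : a < b) :
    ∑ i ∈ Finset.Icc a b, f i = f a + (∑ i ∈ Finset.Icc (a + 1) (b - 1), f i) + f b := by
  have he : Finset.Icc a b = insert a (insert b (Finset.Icc (a + 1) (b - 1))) := by
    ext x; simp only [Finset.mem_Icc, Finset.mem_insert]; omega
  rw [he, Finset.sum_insert (by simp only [Finset.mem_Icc, Finset.mem_insert]; omega),
    Finset.sum_insert (by simp only [Finset.mem_Icc]; omega)]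
  ring

lemma bsymm {k j : ℕ} (hjk : j ≤ k) : bcoef k (k - j) = bcoef k j := by
  unfold bcoef
  congr 2
  rw [Nat.cast_sub hjk]
  ring

lemma beta_exp {k j : ℕ} (h1 : 1 ≤ j) (h2 : j < k) :
    β * Real.exp (-(Real.sqrt 2) * bcoef k j) = ((k : ℝ) - j) * j / 2 := by
  have hβ := beta_pos
  have hkj : (0:ℝ) < (k : ℝ) - j := by
    have : (j:ℝ) < k := by exact_mod_cast h2
    linarith
  have hj : (0:ℝ) < (j:ℝ) := by exact_mod_cast h1
  have harg : 0 < ((k:ℝ) - j) * j / (2 * β) := by positivity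
  have hs : Real.sqrt 2 ≠ 0 := by positivity
  have he : -(Real.sqrt 2) * bcoef k j = Real.log (((k:ℝ) - j) * j / (2 * β)) := by
    unfold bcoef
    field_simp
  rw [he, Real.exp_log harg]
  field_simp

lemma gdiff {k : ℕ} (hke : Even k) {j : ℕ} (h1 : 1 ≤ j) (h2 : j < k) :
    γcoef k (j + 1) - γcoef k j = bcoef k j := by
  obtain ⟨m, hm⟩ := hke
  have hkm : k = 2 * m := by omega
  have hk2 : k / 2 = m := by omega
  rcases lt_trichotomy j m with hc | hc | hc
  · -- j + 1 ≤ m or j = m - 1 cases: j < m means j+1 ≤ m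
    rw [γcoef, γcoef, if_pos (by omega), if_pos (by omega)]
    have hsp := sum_split (bcoef k) (show j < k - j by omega)
    have he1 : k - (j + 1) = k - j - 1 := by omega
    rw [he1, hsp, bsymm (by omega : j ≤ k)]
    ring
  · -- j = m
    subst hc
    rw [γcoef, γcoef, if_neg (by omega), if_pos (by omega)]
    have e1 : k - j = j := by omega
    have e2 : k - (j + 1) + 1 = j := by omega
    have e3 : j + 1 - 1 = j := by omega
    rw [e1, e2, e3, Finset.Icc_self, Finset.sum_singleton]
    ring
  · -- j > m
    rw [γcoef, γcoef, if_neg (by omega), if_neg (by omega)]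
    have e2 : k - (j + 1) + 1 = k - j := by omega
    have e3 : j + 1 - 1 = j := by omega
    rw [e2, e3, sum_split (bcoef k) (show k - j < j by omega), bsymm (by omega : j ≤ k)]
    ring

/-- **Lemma 5.2.** The functions `ρ̃_j⁰ = (j-(k+1)/2)η + γ_j` solve the
Toda-type system `ρ_j' + ρ_j/(2t) - β e^{-√2(ρ_{j+1}-ρ_j)} + β e^{-√2(ρ_j-ρ_{j-1})} = γ_j/(2t)`
on `(-∞,-1]`, with the conventions `ρ_{k+1} = +∞`, `ρ₀ = -∞`. -/
theorem stmt13 (k : ℕ) (hk : 2 ≤ k) (hkeven : Even k)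
    (η : ℝ → ℝ) (hη : etaODE η) :
    ∀ j ∈ Finset.Icc 1 k, ∀ t ≤ (-1 : ℝ),
      deriv (ρt13 k η j) t + ρt13 k η j t / (2 * t) -
          β * (if j = k then 0
            else Real.exp (-(Real.sqrt 2) * (ρt13 k η (j + 1) t - ρt13 k η j t))) +
          β * (if j = 1 then 0
            else Real.exp (-(Real.sqrt 2) * (ρt13 k η j t - ρt13 k η (j - 1) t))) =
        γcoef k j / (2 * t) := by
  intro j hj t ht
  simp only [Finset.mem_Icc] at hj
  obtain ⟨hj1, hjk⟩ := hj
  have ht0 : t ≠ 0 := by linarith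
  set c : ℝ := (j : ℝ) - ((k : ℝ) + 1) / 2 with hc
  have hderiv : deriv (ρt13 k η j) t
      = c * (-(η t / (2 * t)) - Real.exp (-(Real.sqrt 2) * η t)) := by
    have h := ((hη.2 t ht).const_mul c).add_const (γcoef k j)
    have he : ρt13 k η j = fun t => c * η t + γcoef k j := rfl
    rw [he]
    exact h.deriv
  set E : ℝ := Real.exp (-(Real.sqrt 2) * η t) with hE
  -- exp difference identities
  have hfwd : ∀ (hjlt : j < k),
      Real.exp (-(Real.sqrt 2) * (ρt13 k η (j + 1) t - ρt13 k η j t))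
        = E * Real.exp (-(Real.sqrt 2) * bcoef k j) := by
    intro hjlt
    have hd : ρt13 k η (j + 1) t - ρt13 k η j t = η t + bcoef k j := by
      unfold ρt13
      rw [← gdiff hkeven hj1 hjlt]
      push_cast
      ring
    rw [hd, hE, ← Real.exp_add]
    congr 1
    ring
  have hbwd : ∀ (hjgt : 2 ≤ j),
      Real.exp (-(Real.sqrt 2) * (ρt13 k η j t - ρt13 k η (j - 1) t))
        = E * Real.exp (-(Real.sqrt 2) * bcoef k (j - 1)) := by
    intro hjgt
    have hd : ρt13 k η j t - ρt13 k η (j - 1) t = η t + bcoef k (j - 1) := by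
      unfold ρt13
      have hg := gdiff hkeven (show 1 ≤ j - 1 by omega) (show j - 1 < k by omega)
      rw [show j - 1 + 1 = j by omega] at hg
      rw [← hg]
      push_cast [Nat.cast_sub (show 1 ≤ j from hj1)]
      ring
    rw [hd, hE, ← Real.exp_add]
    congr 1
    ring
  rw [hderiv]
  rcases eq_or_lt_of_le hj1 with h1 | h1'
  · -- j = 1
    have hj1' : j = 1 := h1.symm
    subst hj1'
    have hlt : 1 < k := by omega
    rw [if_pos rfl, if_neg (by omega), hfwd hlt]
    have hb := beta_exp (le_refl 1) hlt
    have hcval : c = 1 - ((k:ℝ) + 1) / 2 := by rw [hc]; norm_num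
    rw [show β * (E * Real.exp (-(Real.sqrt 2) * bcoef k 1))
        = E * (β * Real.exp (-(Real.sqrt 2) * bcoef k 1)) by ring, hb]
    unfold ρt13
    push_cast
    field_simp
    ring
  · rcases eq_or_lt_of_le hjk with hk1 | hk2
    · -- j = k
      subst hk1
      rw [if_pos rfl, if_neg (by omega), hbwd (by omega)]
      have hb := beta_exp (show 1 ≤ j - 1 by omega) (show j - 1 < j by omega)
      rw [show β * (E * Real.exp (-(Real.sqrt 2) * bcoef j (j - 1)))
          = E * (β * Real.exp (-(Real.sqrt 2) * bcoef j (j - 1))) by ring, hb]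
      unfold ρt13
      push_cast [Nat.cast_sub (show 1 ≤ j by omega)]
      field_simp
      ring
    · -- 1 < j < k
      rw [if_neg (by omega), if_neg (by omega), hfwd hk2, hbwd (by omega)]
      have hbf := beta_exp hj1 hk2
      have hbb := beta_exp (show 1 ≤ j - 1 by omega) (show j - 1 < k by omega)
      rw [show β * (E * Real.exp (-(Real.sqrt 2) * bcoef k j))
          = E * (β * Real.exp (-(Real.sqrt 2) * bcoef k j)) by ring, hbf,
        show β * (E * Real.exp (-(Real.sqrt 2) * bcoef k (j - 1)))
          = E * (β * Real.exp (-(Real.sqrt 2) * bcoef k (j - 1))) by ring, hbb]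
      unfold ρt13
      push_cast [Nat.cast_sub (show 1 ≤ j by omega)]
      field_simp
      ring
end
end

section
/- Let g(t) = exp( (1/2) ∫_t^{−T̃₀} e^{−√2 η(s)} ds ) for t ≤ −T̃₀. Then for all T₀ > T̃₀ sufficiently large there exists a constant C = C(T̃₀) such that for every t ≤ −T₀: (1/(√(−t) g(t))) ∫_t^{−T₀} (√(−s) g(s) / (−s)) ds ≤ (1/g(t)) ∫_t^{−T₀} (g(s)/(−s)) ds ≤ C / log T₀. -/
open MeasureTheory Real Filter Set Topology

noncomputable section

/-- `g(t) = exp((1/2) ∫_t^{-T̃₀} e^{-√2 η(s)} ds)`. -/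
def gaux (η : ℝ → ℝ) (Tt : ℝ) (t : ℝ) : ℝ :=
  Real.exp ((1 / 2) * ∫ s in t..(-Tt), Real.exp (-(Real.sqrt 2) * η s))

/-- **estimate (5.23).** For `T₀ > T̃₀` large enough there is `C' = C'(T̃₀)`
with `(1/(√(-t) g(t))) ∫_t^{-T₀} √(-s) g(s)/(-s) ds ≤ (1/g(t)) ∫_t^{-T₀} g(s)/(-s) ds ≤ C'/log T₀`
for all `t ≤ -T₀`. -/
theorem stmt15 (η : ℝ → ℝ) (hη : etaODE η) (Tt C : ℝ) (hTt : 1 < Tt) (hC : 0 < C)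
    (hlow : ∀ t ≤ -Tt, C⁻¹ * (Real.log |t| / |t|) ≤ Real.exp (-(Real.sqrt 2) * η t))
    (hup : ∀ t ≤ -Tt, Real.exp (-(Real.sqrt 2) * η t) ≤ C * (Real.log |t| / |t|)) :
    ∃ C' > (0 : ℝ), ∃ T₁ ≥ Tt, ∀ T₀ ≥ T₁, ∀ t ≤ -T₀,
      (1 / (Real.sqrt (-t) * gaux η Tt t)) *
          (∫ s in t..(-T₀), Real.sqrt (-s) * gaux η Tt s / (-s)) ≤
        (1 / gaux η Tt t) * ∫ s in t..(-T₀), gaux η Tt s / (-s) ∧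
      (1 / gaux η Tt t) * (∫ s in t..(-T₀), gaux η Tt s / (-s)) ≤ C' / Real.log T₀ := by
  set F : ℝ → ℝ := fun s => Real.exp (-(Real.sqrt 2) * η s) with hFdef
  set G : ℝ → ℝ := gaux η Tt with hGdef
  have hGexp : ∀ u, G u = Real.exp ((1 / 2) * ∫ s in u..(-Tt), F s) := fun u => rfl
  have hGpos : ∀ u, 0 < G u := fun u => by rw [hGexp]; exact Real.exp_pos _
  have hFpos : ∀ u, 0 < F u := fun u => Real.exp_pos _
  -- continuity of F on Iio (-1)
  have hFca : ∀ u < (-1 : ℝ), ContinuousAt F u := by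
    intro u hu
    have := (hη.2 u hu.le).continuousAt
    exact Real.continuous_exp.continuousAt.comp (continuousAt_const.mul this)
  have hFcon : ContinuousOn F (Set.Iio ((-1 : ℝ))) :=
    fun u hu => (hFca u hu).continuousWithinAt
  have hFmeas : ∀ u < (-1 : ℝ), StronglyMeasurableAtFilter F (𝓝 u) volume :=
    ContinuousOn.stronglyMeasurableAtFilter isOpen_Iio hFcon
  have hFint : ∀ a b : ℝ, a < -1 → b < -1 → IntervalIntegrable F volume a b := by
    intro a b ha hb
    apply ContinuousOn.intervalIntegrable
    apply hFcon.mono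
    intro x hx
    have hx2 : x ≤ max a b := hx.2
    exact lt_of_le_of_lt hx2 (max_lt ha hb)
  -- derivative of G
  have hGderiv : ∀ u ≤ -Tt, HasDerivAt G ((1/2) * (-F u) * G u) u := by
    intro u hu
    have hu1 : u < -1 := by linarith
    have hI : HasDerivAt (fun x => ∫ s in x..(-Tt), F s) (-F u) u :=
      intervalIntegral.integral_hasDerivAt_left (hFint u (-Tt) hu1 (by linarith))
        (hFmeas u (by linarith)) (hFca u (by linarith))
    have h2 := (hI.const_mul (1/2 : ℝ)).exp
    have hGfun : G = fun x => Real.exp ((1/2 : ℝ) * ∫ s in x..(-Tt), F s) := rfl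
    rw [hGfun]
    convert h2 using 1
    simp only []
    ring
  have hGcon : ContinuousOn G (Set.Iic (-Tt)) :=
    fun u hu => (hGderiv u hu).continuousAt.continuousWithinAt
  refine ⟨2 * C, by linarith, Tt, le_refl _, ?_⟩
  intro T₀ hT₀ t ht
  have hT₀1 : 1 < T₀ := lt_of_lt_of_le hTt hT₀
  have htT : t ≤ -T₀ := ht
  have htTt : -T₀ ≤ -Tt := by linarith
  have hlogT : 0 < Real.log T₀ := Real.log_pos hT₀1
  have hIcc : Set.uIcc t (-T₀) = Set.Icc t (-T₀) := Set.uIcc_of_le htT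
  have hmem : ∀ s ∈ Set.Icc t (-T₀), s ≤ -Tt := fun s hs => le_trans hs.2 htTt
  -- integrability of relevant functions
  have hGconI : ContinuousOn G (Set.Icc t (-T₀)) := hGcon.mono (fun s hs => hmem s hs)
  have hsneq : ∀ s ∈ Set.Icc t (-T₀), -s ≠ 0 := by
    intro s hs; have := hmem s hs; intro h; nlinarith
  have hintB : IntervalIntegrable (fun s => G s / (-s)) volume t (-T₀) := by
    apply ContinuousOn.intervalIntegrable
    rw [hIcc]
    exact hGconI.div (continuousOn_id.neg) hsneq
  have hintFG : IntervalIntegrable (fun s => F s * G s) volume t (-T₀) := by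
    apply ContinuousOn.intervalIntegrable
    rw [hIcc]
    refine ContinuousOn.mul ?_ hGconI
    apply hFcon.mono
    intro s hs
    have := hmem s hs
    exact (by linarith : s < (-1:ℝ))
  have hintA : IntervalIntegrable (fun s => Real.sqrt (-s) * G s / (-s)) volume t (-T₀) := by
    apply ContinuousOn.intervalIntegrable
    rw [hIcc]
    exact ((Real.continuous_sqrt.comp continuous_neg).continuousOn.mul hGconI).div
      (continuousOn_id.neg) hsneq
  -- FTC : ∫ F G = 2 (G t - G (-T₀))
  have hFTC : (∫ s in t..(-T₀), F s * G s) = 2 * (G t - G (-T₀)) := by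
    have hH : ∀ u ∈ Set.uIcc t (-T₀), HasDerivAt (fun x => -2 * G x) (F u * G u) u := by
      intro u hu
      rw [hIcc] at hu
      have := (hGderiv u (hmem u hu)).const_mul (-2 : ℝ)
      exact this.congr_deriv (by ring)
    have := intervalIntegral.integral_eq_sub_of_hasDerivAt hH hintFG
    rw [this]; ring
  -- pointwise bound : G s / (-s) ≤ C / log T₀ * (F s * G s) on [t, -T₀]
  have hptB : ∀ s ∈ Set.Icc t (-T₀), G s / (-s) ≤ C / Real.log T₀ * (F s * G s) := by
    intro s hs
    have hsTt : s ≤ -Tt := hmem s hs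
    have hspos : 0 < -s := by linarith
    have habs : |s| = -s := abs_of_neg (by linarith)
    have hlow' := hlow s hsTt
    rw [habs] at hlow'
    have h1 : Real.log (-s) ≤ C * F s * (-s) := by
      have h2 := mul_le_mul_of_nonneg_left hlow' (le_of_lt (mul_pos hC hspos))
      have hCne : C ≠ 0 := ne_of_gt hC
      have hsne : s ≠ 0 := by intro h; rw [h] at hspos; simp at hspos
      calc Real.log (-s) = C * (-s) * (C⁻¹ * (Real.log (-s) / (-s))) := by
            field_simp
        _ ≤ C * (-s) * F s := h2
        _ = C * F s * (-s) := by ring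
    have hloglog : Real.log T₀ ≤ Real.log (-s) := by
      rw [Real.log_le_log_iff (by linarith) hspos]
      linarith [hs.2]
    have h3 : Real.log T₀ ≤ C * F s * (-s) := le_trans hloglog h1
    rw [div_le_iff₀ hspos]
    calc G s = G s * 1 := (mul_one _).symm
      _ ≤ G s * (C * F s * (-s) / Real.log T₀) := by
          apply mul_le_mul_of_nonneg_left _ (hGpos s).le
          rw [le_div_iff₀ hlogT]; linarith
      _ = C / Real.log T₀ * (F s * G s) * (-s) := by ring
  -- bound on B
  have hB : (∫ s in t..(-T₀), G s / (-s)) ≤ 2 * C / Real.log T₀ * G t := by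
    have hmono : (∫ s in t..(-T₀), G s / (-s)) ≤
        ∫ s in t..(-T₀), C / Real.log T₀ * (F s * G s) := by
      apply intervalIntegral.integral_mono_on htT hintB (hintFG.const_mul _)
      exact hptB
    rw [intervalIntegral.integral_const_mul, hFTC] at hmono
    have hGT₀ : 0 < G (-T₀) := hGpos _
    have hCdiv : 0 ≤ C / Real.log T₀ := by positivity
    calc (∫ s in t..(-T₀), G s / (-s)) ≤ C / Real.log T₀ * (2 * (G t - G (-T₀))) := hmono
      _ = 2 * C / Real.log T₀ * G t - 2 * (C / Real.log T₀) * G (-T₀) := by ring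
      _ ≤ 2 * C / Real.log T₀ * G t := by nlinarith [mul_nonneg hCdiv hGT₀.le]
  constructor
  · -- first inequality
    have hsqt : 0 < Real.sqrt (-t) := Real.sqrt_pos.mpr (by linarith)
    have hA : (∫ s in t..(-T₀), Real.sqrt (-s) * G s / (-s)) ≤
        Real.sqrt (-t) * ∫ s in t..(-T₀), G s / (-s) := by
      rw [← intervalIntegral.integral_const_mul]
      apply intervalIntegral.integral_mono_on htT hintA (hintB.const_mul _)
      intro s hs
      have hsTt : s ≤ -Tt := hmem s hs
      have hspos : 0 < -s := by linarith
      have hsq : Real.sqrt (-s) ≤ Real.sqrt (-t) := Real.sqrt_le_sqrt (by linarith [hs.1])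
      rw [mul_div_assoc]
      exact mul_le_mul_of_nonneg_right hsq (div_nonneg (hGpos s).le hspos.le)
    have h1 : (1 / (Real.sqrt (-t) * G t)) * (∫ s in t..(-T₀), Real.sqrt (-s) * G s / (-s)) ≤
        (1 / (Real.sqrt (-t) * G t)) * (Real.sqrt (-t) * ∫ s in t..(-T₀), G s / (-s)) := by
      apply mul_le_mul_of_nonneg_left hA
      exact le_of_lt (one_div_pos.mpr (mul_pos hsqt (hGpos t)))
    refine le_trans h1 (le_of_eq ?_)
    have hGt : G t ≠ 0 := ne_of_gt (hGpos t)
    have hst : Real.sqrt (-t) ≠ 0 := ne_of_gt hsqt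
    field_simp
  · -- second inequality
    have hGt : 0 < G t := hGpos t
    have h1 : (1 / G t) * (∫ s in t..(-T₀), G s / (-s)) ≤
        (1 / G t) * (2 * C / Real.log T₀ * G t) := by
      apply mul_le_mul_of_nonneg_left hB
      exact le_of_lt (one_div_pos.mpr (hGpos t))
    refine le_trans h1 (le_of_eq ?_)
    have hGt : G t ≠ 0 := ne_of_gt (hGpos t)
    field_simp
end
end
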